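/- Let $n \geq 0$, $k \geq 1$, probabilities $0 < P_0 \leq \cdots \leq P_k = 1$, and let $M_n$ be defined by the recursion $P(M_n^\ell = m) = \binom{n}{m}P_\ell^m(1-P_\ell)^{n-m} + (1-P_\ell)^n P(M_n^{\ell+1}=m)$ for $m>0$, $M_n^k = n$, $M_n = M_n^0$. Then for every complex $u$: $E[u^{M_n}] = (1+P_0(u-1))^n - (1-P_0)^n + \sum_{0<\ell<k} \prod_{j<\ell}(1-P_j)^n \left((1+P_\ell(u-1))^n - (1-P_\ell)^n\right) + u^n \prod_{j<k}(1-P_j)^n$. -/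

import Mathlib

/-- Closed-form probability generating function of the number `M_n` of blocks
mined in the staircase leader-election scheme, for every complex `u`. -/
theorem stmt7 (n k : ℕ) (hk : 1 ≤ k) (P : ℕ → ℝ)
    (hP0 : 0 < P 0) (hmono : ∀ i, i < k → P i ≤ P (i + 1)) (hPk : P k = 1)
    (prob : ℕ → ℕ → ℝ)
    (hprobk : ∀ m, prob k m = if m = n then 1 else 0)
    (hprob0 : ∀ ℓ, ℓ < k → prob ℓ 0 = if n = 0 then 1 else 0)
    (hprobrec : ∀ ℓ m, ℓ < k → 0 < m →
      prob ℓ m = (n.choose m : ℝ) * P ℓ ^ m * (1 - P ℓ) ^ (n - m)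
        + (1 - P ℓ) ^ n * prob (ℓ + 1) m) :
    ∀ u : ℂ, ∑' m : ℕ, ((prob 0 m : ℝ) : ℂ) * u ^ m
      = (1 + (P 0 : ℂ) * (u - 1)) ^ n - (1 - (P 0 : ℂ)) ^ n
        + ∑ ℓ ∈ Finset.Ioo 0 k,
            (∏ j ∈ Finset.range ℓ, (1 - (P j : ℂ)) ^ n) *
              ((1 + (P ℓ : ℂ) * (u - 1)) ^ n - (1 - (P ℓ : ℂ)) ^ n)
        + u ^ n * ∏ j ∈ Finset.range k, (1 - (P j : ℂ)) ^ n := by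
  intro u
  -- prob vanishes above n
  have hzero : ∀ d ℓ, ℓ + d = k → ∀ m, n < m → prob ℓ m = 0 := by
    intro d
    induction d with
    | zero =>
      intro ℓ h m hm
      have : ℓ = k := by omega
      subst this
      rw [hprobk]
      simp [Nat.ne_of_gt hm]
    | succ d ih =>
      intro ℓ h m hm
      have hℓ : ℓ < k := by omega
      rw [hprobrec ℓ m hℓ (by omega), Nat.choose_eq_zero_of_lt hm,
        ih (ℓ + 1) (by omega) m hm]
      ring
  -- the finite pgf
  set F : ℕ → ℂ := fun ℓ => ∑ m ∈ Finset.range (n + 1), ((prob ℓ m : ℝ) : ℂ) * u ^ m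
    with hF
  have hFk : F k = u ^ n := by
    rw [hF]
    simp only
    rw [Finset.sum_eq_single n]
    · rw [hprobk]; simp
    · intro m _ hm; rw [hprobk]; simp [hm]
    · intro h; exact absurd (Finset.self_mem_range_succ n) h
  -- binomial identity
  have hbin : ∀ ℓ : ℕ, ((1 : ℂ) + (P ℓ : ℂ) * (u - 1)) ^ n
      = ∑ m ∈ Finset.range (n + 1),
          (n.choose m : ℂ) * (P ℓ : ℂ) ^ m * (1 - (P ℓ : ℂ)) ^ (n - m) * u ^ m := by
    intro ℓ
    rw [show (1 : ℂ) + (P ℓ : ℂ) * (u - 1) = (P ℓ : ℂ) * u + (1 - (P ℓ : ℂ)) by ring,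
      add_pow]
    refine Finset.sum_congr rfl fun m _ => ?_
    rw [mul_pow]; ring
  -- zeroth value
  have hq0 : ∀ ℓ, ℓ ≤ k → prob ℓ 0 = if n = 0 then 1 else 0 := by
    intro ℓ hℓ
    rcases eq_or_lt_of_le hℓ with rfl | h
    · rw [hprobk]; by_cases hn : n = 0 <;> simp [hn, eq_comm]
    · exact hprob0 ℓ h
  -- one-step recursion for F
  have hrec : ∀ ℓ, ℓ < k →
      F ℓ = ((1 + (P ℓ : ℂ) * (u - 1)) ^ n - (1 - (P ℓ : ℂ)) ^ n)
        + (1 - (P ℓ : ℂ)) ^ n * F (ℓ + 1) := by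
    intro ℓ hℓ
    rcases eq_or_ne n 0 with hn | hn
    · subst hn
      simp [hF, Finset.sum_range_one, hq0 ℓ hℓ.le, hq0 (ℓ + 1) hℓ]
    · have key : ∀ m ∈ Finset.range (n + 1),
          ((prob ℓ m : ℝ) : ℂ) * u ^ m
            + (if m = 0 then (1 - (P ℓ : ℂ)) ^ n else 0)
          = (n.choose m : ℂ) * (P ℓ : ℂ) ^ m * (1 - (P ℓ : ℂ)) ^ (n - m) * u ^ m
            + (1 - (P ℓ : ℂ)) ^ n * (((prob (ℓ + 1) m : ℝ) : ℂ) * u ^ m) := by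
        intro m _
        rcases eq_or_ne m 0 with rfl | hm
        · rw [hq0 ℓ hℓ.le, hq0 (ℓ + 1) hℓ]
          simp [hn]
        · rw [hprobrec ℓ m hℓ (Nat.pos_of_ne_zero hm)]
          push_cast
          simp only [hm, if_false, add_zero]
          ring
      have hsum := Finset.sum_congr rfl key
      rw [Finset.sum_add_distrib, Finset.sum_add_distrib, Finset.sum_ite_eq'] at hsum
      simp only [Finset.mem_range, Nat.succ_pos, if_true] at hsum
      rw [← Finset.mul_sum] at hsum
      have : F ℓ + (1 - (P ℓ : ℂ)) ^ n
          = (1 + (P ℓ : ℂ) * (u - 1)) ^ n + (1 - (P ℓ : ℂ)) ^ n * F (ℓ + 1) := by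
        rw [hbin ℓ, hF]
        simpa using hsum
      linear_combination this
  -- unrolled formula
  have hmain : ∀ d ℓ, ℓ + d = k →
      F ℓ = (∑ j ∈ Finset.Ico ℓ k,
          (∏ i ∈ Finset.Ico ℓ j, (1 - (P i : ℂ)) ^ n)
            * ((1 + (P j : ℂ) * (u - 1)) ^ n - (1 - (P j : ℂ)) ^ n))
        + u ^ n * ∏ i ∈ Finset.Ico ℓ k, (1 - (P i : ℂ)) ^ n := by
    intro d
    induction d with
    | zero =>
      intro ℓ h
      have : ℓ = k := by omega
      subst this
      simp [hFk]
    | succ d ih =>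
      intro ℓ h
      have hℓ : ℓ < k := by omega
      have hnot : ℓ ∉ Finset.Ico (ℓ + 1) k := by simp
      rw [hrec ℓ hℓ, ih (ℓ + 1) (by omega),
        ← Finset.insert_Ico_add_one_left_eq_Ico hℓ, Finset.sum_insert hnot,
        Finset.prod_insert hnot]
      have hIJ : ∀ j ∈ Finset.Ico (ℓ + 1) k,
          (∏ i ∈ Finset.Ico ℓ j, (1 - (P i : ℂ)) ^ n)
            * ((1 + (P j : ℂ) * (u - 1)) ^ n - (1 - (P j : ℂ)) ^ n)
          = (1 - (P ℓ : ℂ)) ^ n * ((∏ i ∈ Finset.Ico (ℓ + 1) j, (1 - (P i : ℂ)) ^ n)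
            * ((1 + (P j : ℂ) * (u - 1)) ^ n - (1 - (P j : ℂ)) ^ n)) := by
        intro j hj
        rw [Finset.mem_Ico] at hj
        rw [← Finset.insert_Ico_add_one_left_eq_Ico (by omega : ℓ < j), Finset.prod_insert (by simp)]
        ring
      rw [Finset.sum_congr rfl hIJ, ← Finset.mul_sum, Finset.Ico_self, Finset.prod_empty]
      ring
  -- assemble
  have htsum : ∑' m : ℕ, ((prob 0 m : ℝ) : ℂ) * u ^ m = F 0 := by
    rw [hF]
    refine tsum_eq_sum fun m hm => ?_
    rw [Finset.mem_range, not_lt] at hm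
    rw [hzero k 0 (by omega) m (by omega)]
    simp
  rw [htsum, hmain k 0 (by omega)]
  have h0k : (0 : ℕ) < k := hk
  have hIoo : Finset.Ioo 0 k = Finset.Ico 1 k := by ext x; simp; omega
  simp only [Finset.range_eq_Ico, hIoo]
  rw [← Finset.insert_Ico_add_one_left_eq_Ico h0k, Finset.sum_insert (by simp),
    Finset.prod_insert (by simp), Finset.Ico_self, Finset.prod_empty, one_mul, zero_add]
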